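/- arXiv:0707.2119 — 2 statements merged into one kernel-verified Lean document; each statement's English description precedes it below -/
import Mathlib

section
/- Fix l ≥ 1 and set μ = 1 + ν₂(l). For any k ≥ 0 and any 0 ≤ j ≤ 2^μ − 2, ν₂(A_{l, l + k·2^μ + j+1}) = ν₂(A_{l, l + k·2^μ + j}); that is, ν₂(A_{l,m}) is constant on each block C_{k,l} = {l + k·2^μ + j : 0 ≤ j ≤ 2^μ − 1}. -/
open Finset

open Nat


lemma cert_aux (l k b : ℕ) (hlk : l ≤ k) :
    (2:ℚ)^(k+1) * ((2*b).choose b) * ((2*k+b+2).choose (k+b+1)) * ((k+1).choose l)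
      * ((k:ℚ)+1-l) * (2*(b:ℚ)+1)
    = 2^k * ((2*b+2).choose (b+1)) * ((2*k+b+1).choose (k+b+1)) * (k.choose l)
      * ((b:ℚ)+1) * (2*(k:ℚ)+b+2) := by
  have h1 : (b+1) * ((2*b+2).choose (b+1)) = 2*(2*b+1) * ((2*b).choose b) := by
    have := Nat.succ_mul_centralBinom_succ b
    simp only [Nat.centralBinom] at this
    have e1 : 2*(b+1) = 2*b+2 := by ring
    rw [e1] at this
    linarith [this]
  have h2 : (2*k+b+2) * ((2*k+b+1).choose (k+b+1)) = ((2*k+b+2).choose (k+b+1)) * (k+1) := by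
    have hs := Nat.add_one_mul_choose_eq (2*k+b+1) k
    have e1 : (2*k+b+1).choose (k+b+1) = (2*k+b+1).choose k := by
      have e : k+b+1 = 2*k+b+1 - k := by omega
      rw [e, Nat.choose_symm (by omega)]
    have e2 : (2*k+b+2).choose (k+b+1) = (2*k+b+2).choose (k+1) := by
      have e : k+b+1 = 2*k+b+2 - (k+1) := by omega
      rw [e, Nat.choose_symm (by omega)]
    rw [e1, e2]
    simpa [Nat.succ_eq_add_one] using hs
  have h3 : (k+1) * (k.choose l) = ((k+1).choose l) * (k+1-l) := by
    have hs := Nat.add_one_mul_choose_eq k (k-l)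
    have e1 : k.choose (k-l) = k.choose l := Nat.choose_symm hlk
    have e2 : (k+1).choose (k-l+1) = (k+1).choose l := by
      have e : k-l+1 = (k+1) - l := by omega
      rw [e, Nat.choose_symm (by omega)]
    rw [e1, e2] at hs
    have e3 : k + 1 - l = k - l + 1 := by omega
    rw [e3]
    simpa [Nat.succ_eq_add_one] using hs
  -- cast to ℚ
  have q1 : ((b:ℚ)+1) * ((2*b+2).choose (b+1) : ℚ) = 2*(2*(b:ℚ)+1) * ((2*b).choose b : ℚ) := by
    exact_mod_cast congrArg (Nat.cast (R := ℚ)) h1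
  have q2 : (2*(k:ℚ)+b+2) * ((2*k+b+1).choose (k+b+1) : ℚ)
      = ((2*k+b+2).choose (k+b+1) : ℚ) * ((k:ℚ)+1) := by
    exact_mod_cast congrArg (Nat.cast (R := ℚ)) h2
  have q3 : ((k:ℚ)+1) * (k.choose l : ℚ) = ((k+1).choose l : ℚ) * ((k:ℚ)+1-l) := by
    have := congrArg (Nat.cast (R := ℚ)) h3
    push_cast [Nat.cast_sub (by omega : l ≤ k+1)] at this
    convert this using 2 <;> push_cast <;> ring
  have hb : ((b:ℚ)+1) ≠ 0 := by positivity
  have hk : ((k:ℚ)+1) ≠ 0 := by positivity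
  have e1 : ((2*b+2).choose (b+1) : ℚ) = 2*(2*(b:ℚ)+1)*((2*b).choose b)/((b:ℚ)+1) := by
    rw [eq_div_iff hb]; linear_combination q1
  have e2 : ((2*k+b+1).choose (k+b+1) : ℚ)
      = ((2*k+b+2).choose (k+b+1))*((k:ℚ)+1)/(2*(k:ℚ)+b+2) := by
    rw [eq_div_iff (by positivity)]; linear_combination q2
  have e3 : (k.choose l : ℚ) = ((k+1).choose l)*((k:ℚ)+1-l)/((k:ℚ)+1) := by
    rw [eq_div_iff hk]; linear_combination q3
  rw [e1, e2, e3]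
  field_simp
  ring


noncomputable def S (l m : ℕ) : ℚ :=
  ∑ k ∈ Finset.Icc l m,
    (2 : ℚ) ^ k * ((2 * m - 2 * k).choose (m - k)) * ((m + k).choose m) * (k.choose l)

noncomputable def G (l m k : ℕ) : ℚ :=
  (2:ℚ)^k * ((2*m - 2*k).choose (m - k)) * ((m + k).choose m) * (k.choose l)
    * ((k:ℚ) - l) * (2*(m:ℚ) + 1 - 2*k)

lemma cert (l k m : ℕ) (hlk : l ≤ k) (hkm : k < m) :
    G l m (k+1)
    = (2:ℚ)^k * ((2*m - 2*k).choose (m - k)) * ((m + k).choose m) * (k.choose l)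
        * ((m:ℚ) - k) * ((m:ℚ) + k + 1) := by
  obtain ⟨b, rfl⟩ : ∃ b, m = k + 1 + b := ⟨m - (k+1), by omega⟩
  have r1 : 2*(k+1+b) - 2*(k+1) = 2*b := by omega
  have r2 : k+1+b - (k+1) = b := by omega
  have r3 : 2*(k+1+b) - 2*k = 2*b+2 := by omega
  have r5 : k+1+b + (k+1) = 2*k+b+2 := by omega
  have r6 : k+1+b + k = 2*k+b+1 := by omega
  have r4 : k+1+b - k = b+1 := by omega
  have r7 : k+1+b = k+b+1 := by omega
  unfold G
  rw [r1, r2, r3, r5, r6]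
  rw [r4, r7]
  have hca := cert_aux l k b hlk
  push_cast at hca ⊢
  linear_combination hca

lemma tele (F : ℕ → ℚ) (a b : ℕ) (h : a ≤ b + 1) :
    ∑ k ∈ Finset.Icc a b, (F (k+1) - F k) = F (b+1) - F a := by
  rcases le_or_gt a b with hab | hab
  · rw [← Finset.Ico_add_one_right_eq_Icc, Finset.sum_Ico_eq_sum_range]
    have hs := Finset.sum_range_sub (fun i => F (a + i)) (b + 1 - a)
    have e2 : a + (b + 1 - a) = b + 1 := by omega
    rw [e2] at hs
    simpa [add_assoc] using hs
  · have ha : a = b + 1 := by omega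
    subst ha
    rw [Finset.Icc_eq_empty (by omega)]
    simp

lemma star (l m : ℕ) (h : l + 2 ≤ m) :
    ((m:ℚ) - l) * ((m:ℚ) + l + 1) * S l m
      = (2*(m:ℚ)+1)*((l:ℚ)+1) * S (l+1) m - ((l:ℚ)+1)*((l:ℚ)+2) * S (l+2) m := by
  have hext : ∀ j : ℕ, l ≤ j → S j m = ∑ k ∈ Finset.Icc l m,
      (2 : ℚ) ^ k * ((2 * m - 2 * k).choose (m - k)) * ((m + k).choose m) * (k.choose j) := by
    intro j hj
    unfold S
    apply Finset.sum_subset (Finset.Icc_subset_Icc_left hj)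
    intro x hx hx'
    simp only [Finset.mem_Icc] at hx hx'
    have : x < j := by omega
    rw [Nat.choose_eq_zero_of_lt this]
    push_cast; ring
  rw [hext (l+1) (by omega), hext (l+2) (by omega), hext l le_rfl]
  rw [Finset.mul_sum, Finset.mul_sum, Finset.mul_sum, ← Finset.sum_sub_distrib]
  rw [← sub_eq_zero, ← Finset.sum_sub_distrib]
  have hc1 : ∀ k : ℕ, l ≤ k → ((k.choose (l+1)):ℚ) * ((l:ℚ)+1)
      = (k.choose l) * ((k:ℚ) - l) := by
    intro k hk
    have q := congrArg (Nat.cast (R := ℚ)) (Nat.choose_succ_right_eq k l)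
    push_cast [Nat.cast_sub hk] at q
    linear_combination q
  have hc2 : ∀ k : ℕ, l ≤ k → ((k.choose (l+2)):ℚ) * ((l:ℚ)+2)
      = (k.choose (l+1)) * ((k:ℚ) - l - 1) := by
    intro k hk
    by_cases hk1 : l + 1 ≤ k
    · have q := congrArg (Nat.cast (R := ℚ)) (Nat.choose_succ_right_eq k (l+1))
      push_cast [Nat.cast_sub hk1] at q
      linear_combination q
    · have hkl : k = l := by omega
      subst hkl
      rw [Nat.choose_eq_zero_of_lt (by omega), Nat.choose_eq_zero_of_lt (by omega)]
      push_cast; ring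
  set Gif : ℕ → ℚ := fun k => if k ≤ m then G l m k else 0 with hGif
  have hstep : (∑ k ∈ Finset.Icc l m, (Gif (k+1) - Gif k)) = 0 := by
    rw [tele _ _ _ (by omega)]
    have h1 : ¬ (m + 1 ≤ m) := by omega
    have h2 : l ≤ m := by omega
    simp only [hGif, if_neg h1, if_pos h2]
    unfold G
    push_cast
    ring
  rw [← hstep]
  refine Finset.sum_congr rfl fun k hk => ?_
  simp only [Finset.mem_Icc] at hk
  have h1 := hc1 k hk.1
  have h2 := hc2 k hk.1
  rcases lt_or_eq_of_le hk.2 with hkm | hkm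
  · have e1 : Gif (k+1) = G l m (k+1) := by simp only [hGif, if_pos (by omega : k+1 ≤ m)]
    have e2 : Gif k = G l m k := by simp only [hGif, if_pos hk.2]
    rw [e1, e2, cert l k m hk.1 hkm]
    unfold G
    push_cast at h1 h2 ⊢
    linear_combination (((k:ℚ) - l - 1) - (2*(m:ℚ)+1))
        * ((2:ℚ)^k * ((2*m - 2*k).choose (m - k) : ℚ) * ((m + k).choose m : ℚ)) * h1
      + ((l:ℚ)+1)
        * ((2:ℚ)^k * ((2*m - 2*k).choose (m - k) : ℚ) * ((m + k).choose m : ℚ)) * h2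
  · subst hkm
    have e1 : Gif (k+1) = 0 := by simp only [hGif, if_neg (by omega : ¬ (k+1 ≤ k))]
    have e2 : Gif k = G l k k := by simp only [hGif, if_pos le_rfl]
    rw [e1, e2]
    unfold G
    push_cast at h1 h2 ⊢
    linear_combination (((k:ℚ) - l - 1) - (2*(k:ℚ)+1))
        * ((2:ℚ)^k * ((2*k - 2*k).choose (k - k) : ℚ) * ((k + k).choose k : ℚ)) * h1
      + ((l:ℚ)+1)
        * ((2:ℚ)^k * ((2*k - 2*k).choose (k - k) : ℚ) * ((k + k).choose k : ℚ)) * h2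

noncomputable def A (l m : ℕ) : ℚ :=
  ((l.factorial * m.factorial : ℕ) : ℚ) / 2 ^ (m - l) *
    ∑ k ∈ Finset.Icc l m,
      (2 : ℚ) ^ k * ((2 * m - 2 * k).choose (m - k)) * ((m + k).choose m) * (k.choose l)

lemma A_S (l m : ℕ) : (2:ℚ)^(m-l) * A l m = (l.factorial : ℚ) * (m.factorial : ℚ) * S l m := by
  unfold A S
  have h2 : ((2:ℚ)^(m-l)) ≠ 0 := by positivity
  push_cast
  field_simp

lemma exists_odd (d : ℕ) : ∀ l : ℕ, ∃ t : ℤ, Odd t ∧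
    A l (l + d) * (d.factorial : ℚ) = 2^l * (((2*l + d).factorial : ℚ)) * (t : ℚ) := by
  induction d using Nat.twoStepInduction with
  | zero =>
    intro l
    refine ⟨1, odd_one, ?_⟩
    have hcf := Nat.choose_mul_factorial_mul_factorial (show l ≤ 2*l by omega)
    have e : 2*l - l = l := by omega
    rw [e] at hcf
    have hq : ((2*l).choose l : ℚ) * (l.factorial : ℚ) * (l.factorial : ℚ) = ((2*l).factorial : ℚ) := by
      exact_mod_cast hcf
    unfold A
    simp only [Nat.add_zero]
    rw [Finset.Icc_self, Finset.sum_singleton]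
    simp only [Nat.sub_self, Nat.choose_self, Nat.choose_zero_right]
    have e2 : l + l = 2*l := by omega
    rw [e2]
    push_cast [Nat.factorial_zero]
    linear_combination ((2:ℚ)^l) * hq
  | one =>
    intro l
    refine ⟨2*(l:ℤ)+3, ⟨(l:ℤ)+1, by ring⟩, ?_⟩
    have hcf1 := Nat.choose_mul_factorial_mul_factorial (show l+1 ≤ 2*l+1 by omega)
    have er1 : 2*l+1 - (l+1) = l := by omega
    rw [er1] at hcf1
    have hcf2 := Nat.choose_mul_factorial_mul_factorial (show l+1 ≤ 2*l+2 by omega)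
    have er2 : 2*l+2 - (l+1) = l+1 := by omega
    rw [er2] at hcf2
    have q1 : ((2*l+1).choose (l+1) : ℚ) * ((l+1).factorial : ℚ) * (l.factorial : ℚ) = ((2*l+1).factorial : ℚ) := by
      exact_mod_cast hcf1
    have q2 : ((2*l+2).choose (l+1) : ℚ) * ((l+1).factorial : ℚ) * ((l+1).factorial : ℚ) = ((2*l+2).factorial : ℚ) := by
      exact_mod_cast hcf2
    have q3 : ((2*l+2).factorial : ℚ) = (2*(l:ℚ)+2) * ((2*l+1).factorial : ℚ) := by
      have : (2*l+2).factorial = (2*l+2) * (2*l+1).factorial := Nat.factorial_succ (2*l+1)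
      push_cast [this]; ring
    have q4 : ((l+1).factorial : ℚ) = ((l:ℚ)+1) * (l.factorial : ℚ) := by
      push_cast [Nat.factorial_succ]; ring
    unfold A
    rw [Finset.sum_Icc_succ_top (by omega : l ≤ l+1), Finset.Icc_self, Finset.sum_singleton]
    have e1 : 2*(l+1) - 2*l = 2 := by omega
    have e2 : l+1 - l = 1 := by omega
    have e3 : 2*(l+1) - 2*(l+1) = 0 := by omega
    have e4 : l+1 - (l+1) = 0 := by omega
    have e5 : l+1+l = 2*l+1 := by omega
    have e6 : l+1+(l+1) = 2*l+2 := by omega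
    simp only [e1, e2, e3, e4, e5, e6, Nat.choose_succ_self_right]
    push_cast [Nat.factorial_one, Nat.choose_self, Nat.choose_zero_right]
    linear_combination ((2:ℚ)^l) * q1 + ((2:ℚ)^l) * q2 + ((2:ℚ)^l) * q3
      - ((2:ℚ)^l * ((2*l+2).choose (l+1) : ℚ) * ((l+1).factorial : ℚ)) * q4
  | more d ihd ihd1 =>
    intro l
    obtain ⟨t1, ht1o, h1⟩ := ihd1 (l+1)
    obtain ⟨t2, ht2o, h2⟩ := ihd (l+2)
    have e1 : l+1+(d+1) = l+(d+2) := by omega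
    have e2 : 2*(l+1)+(d+1) = 2*l+d+3 := by omega
    rw [e1, e2] at h1
    have e3 : l+2+d = l+(d+2) := by omega
    have e4 : 2*(l+2)+d = 2*l+d+4 := by omega
    rw [e3, e4] at h2
    have hstar := star l (l+(d+2)) (by omega)
    have hA0 := A_S l (l+(d+2))
    have hA1 := A_S (l+1) (l+(d+2))
    have hA2 := A_S (l+2) (l+(d+2))
    have s0 : l+(d+2) - l = d+2 := by omega
    have s1 : l+(d+2) - (l+1) = d+1 := by omega
    have s2 : l+(d+2) - (l+2) = d := by omega
    rw [s0] at hA0; rw [s1] at hA1; rw [s2] at hA2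
    -- factorial expansions
    have f1 : (((l+1).factorial : ℕ) : ℚ) = ((l:ℚ)+1) * (l.factorial : ℚ) := by
      push_cast [Nat.factorial_succ]; ring
    have f2 : (((l+2).factorial : ℕ) : ℚ) = ((l:ℚ)+2) * ((l:ℚ)+1) * (l.factorial : ℚ) := by
      have : (l+2).factorial = (l+2) * ((l+1) * l.factorial) := by
        rw [Nat.factorial_succ, Nat.factorial_succ]
      push_cast [this]; ring
    have f3 : (((d+1).factorial : ℕ) : ℚ) = ((d:ℚ)+1) * (d.factorial : ℚ) := by
      push_cast [Nat.factorial_succ]; ring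
    have f4 : (((d+2).factorial : ℕ) : ℚ) = ((d:ℚ)+2) * ((d:ℚ)+1) * (d.factorial : ℚ) := by
      have : (d+2).factorial = (d+2) * ((d+1) * d.factorial) := by
        rw [Nat.factorial_succ, Nat.factorial_succ]
      push_cast [this]; ring
    have e5 : 2*l+(d+2) = 2*l+d+2 := by omega
    have f5 : (((2*l+d+3).factorial : ℕ) : ℚ) = (2*(l:ℚ)+d+3) * ((2*l+d+2).factorial : ℚ) := by
      push_cast [Nat.factorial_succ (2*l+d+2)]; ring
    have f6 : (((2*l+d+4).factorial : ℕ) : ℚ)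
        = (2*(l:ℚ)+d+4) * (2*(l:ℚ)+d+3) * ((2*l+d+2).factorial : ℚ) := by
      have : (2*l+d+4).factorial = (2*l+d+4) * ((2*l+d+3) * (2*l+d+2).factorial) := by
        rw [Nat.factorial_succ, Nat.factorial_succ]
      push_cast [this]; ring
    rw [f3, f5] at h1
    rw [f6] at h2
    rw [f1] at hA1
    rw [f2] at hA2
    refine ⟨(2*(l:ℤ)+2*d+5)*t1 - (2*(l:ℤ)+d+4)*((d:ℤ)+1)*t2, ?_, ?_⟩
    · have heven : Even ((2*(l:ℤ)+d+4)*((d:ℤ)+1)) := by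
        rcases Int.even_or_odd (d:ℤ) with he | ho
        · obtain ⟨r, hr⟩ := he
          exact Even.mul_right ⟨(l:ℤ)+r+2, by omega⟩ _
        · obtain ⟨r, hr⟩ := ho
          exact Even.mul_left ⟨r+1, by omega⟩ _
      have hodd : Odd ((2*(l:ℤ)+2*d+5)*t1) := by
        refine Odd.mul ⟨(l:ℤ)+d+2, by ring⟩ ht1o
      exact hodd.sub_even (heven.mul_right t2)
    · rw [e5]
      apply mul_left_cancel₀ (show (4*(2:ℚ)^d*(2*(l:ℚ)+d+3)) ≠ 0 by positivity)
      push_cast at hstar ⊢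
      rw [f4]
      linear_combination
        (((d:ℚ)+2)*((d:ℚ)+1)*(d.factorial:ℚ)*(2*(l:ℚ)+d+3)) * hA0
        + (((d:ℚ)+1)*(d.factorial:ℚ)*((l.factorial:ℚ)*(((l+(d+2)).factorial : ℕ):ℚ))) * hstar
        - ((2*(l:ℚ)+2*d+5)*((d:ℚ)+1)*(d.factorial:ℚ)) * hA1
        + (((d:ℚ)+1)*(d.factorial:ℚ)) * hA2
        + (2*(2:ℚ)^d*(2*(l:ℚ)+2*d+5)) * h1
        - ((2:ℚ)^d*((d:ℚ)+1)) * h2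

lemma val_add_pow (μ x c : ℕ) (hx : 0 < x) (hlt : x < 2^μ) :
    padicValNat 2 (x + c * 2^μ) = padicValNat 2 x := by
  set v := padicValNat 2 x with hv_def
  have hdvd : 2^v ∣ x := pow_padicValNat_dvd
  have hv : v < μ := by
    by_contra hge
    have h1 : (2:ℕ)^μ ∣ 2^v := pow_dvd_pow 2 (by omega)
    have h2 := h1.trans hdvd
    have := Nat.le_of_dvd hx h2
    omega
  obtain ⟨y, hy⟩ := hdvd
  have hyne : y ≠ 0 := by rintro rfl; omega
  have hyodd : ¬ 2 ∣ y := by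
    rintro ⟨z, hz⟩
    have hdd : 2^(v+1) ∣ x := ⟨z, by rw [hy, hz]; ring⟩
    exact pow_succ_padicValNat_not_dvd (by omega : x ≠ 0) hdd
  have hx2 : x + c * 2^μ = 2^v * (y + 2^(μ-v) * c) := by
    rw [hy]
    have h3 : (2:ℕ)^μ = 2^v * 2^(μ-v) := by rw [← pow_add]; congr 1; omega
    rw [h3]; ring
  have hnodd : ¬ 2 ∣ (y + 2^(μ-v) * c) := by
    intro hdv
    have h2 : 2 ∣ 2^(μ-v)*c := Dvd.dvd.mul_right (dvd_pow_self 2 (by omega : μ-v ≠ 0)) c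
    have h3 : 2 ∣ y := by
      have := Nat.dvd_sub hdv h2
      simpa using this
    exact hyodd h3
  rw [hx2, padicValNat.mul (by positivity) (by omega), padicValNat.prime_pow,
    padicValNat.eq_zero_of_not_dvd hnodd]
  omega

lemma val_A (l m : ℕ) (h : l ≤ m) :
    padicValRat 2 (A l m) = (l : ℤ) + padicValNat 2 ((m+l).factorial)
      - padicValNat 2 ((m-l).factorial) := by
  obtain ⟨t, hto, ht⟩ := exists_odd (m - l) l
  have e1 : l + (m - l) = m := by omega
  have e2 : 2*l + (m - l) = m + l := by omega
  rw [e1, e2] at ht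
  have hfacne : ((m-l).factorial : ℚ) ≠ 0 := by
    exact_mod_cast Nat.cast_ne_zero.mpr (Nat.factorial_ne_zero _)
  have htne : t ≠ 0 := by rintro rfl; obtain ⟨r, hr⟩ := hto; omega
  have htqne : (t : ℚ) ≠ 0 := Int.cast_ne_zero.mpr htne
  have hNne : ((2^l * (m+l).factorial : ℕ) : ℚ) ≠ 0 := by
    have : (2^l * (m+l).factorial : ℕ) ≠ 0 :=
      Nat.mul_ne_zero (by positivity) (Nat.factorial_ne_zero _)
    exact_mod_cast Nat.cast_ne_zero.mpr this
  have hA : A l m = ((2^l * (m+l).factorial : ℕ) : ℚ) * (t : ℚ) / ((m-l).factorial : ℚ) := by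
    rw [eq_div_iff hfacne]
    push_cast at ht ⊢
    linear_combination ht
  rw [hA, padicValRat.div (mul_ne_zero hNne htqne) hfacne,
    padicValRat.mul hNne htqne]
  rw [padicValRat.of_nat, padicValRat.of_nat, padicValRat.of_int]
  rw [padicValNat.mul (by positivity) (Nat.factorial_ne_zero _), padicValNat.prime_pow]
  have htval : padicValInt 2 t = 0 := by
    apply padicValInt.eq_zero_of_not_dvd
    intro hdv
    rw [← Int.not_even_iff_odd] at hto
    exact hto ⟨t/2, by omega⟩
  rw [htval]
  push_cast
  ring

theorem val_A_block_const (l : ℕ) (h : 1 ≤ l) (k j : ℕ)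
    (hj : j ≤ 2 ^ (1 + padicValNat 2 l) - 2) :
    padicValRat 2 (A l (l + k * 2 ^ (1 + padicValNat 2 l) + j + 1)) =
      padicValRat 2 (A l (l + k * 2 ^ (1 + padicValNat 2 l) + j)) := by
  set μ := 1 + padicValNat 2 l with hμ
  have hμ1 : 1 ≤ μ := by omega
  have h2μ : 2 ≤ 2^μ := by
    calc (2:ℕ) = 2^1 := (pow_one 2).symm
    _ ≤ 2^μ := Nat.pow_le_pow_right (by norm_num) hμ1
  have hjlt : j + 1 < 2^μ := by omega
  obtain ⟨w, hw⟩ : 2^μ ∣ 2*l := by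
    obtain ⟨y, hy⟩ : (2:ℕ)^(padicValNat 2 l) ∣ l := pow_padicValNat_dvd
    exact ⟨y, by rw [hy, hμ, pow_add, pow_one]; ring⟩
  set m := l + k * 2 ^ μ + j with hm
  have hKm : ∀ a b : ℕ, a + k * 2^μ + b = a + b + k * 2^μ := fun a b => by ring
  have hlm : l ≤ m := by rw [hm, hKm]; omega
  have key1 : padicValNat 2 (m + l + 1) = padicValNat 2 (j+1) := by
    have e : m + l + 1 = (j+1) + (k + w) * 2^μ := by
      rw [hm]
      calc l + k * 2^μ + j + l + 1 = (j+1) + k * 2^μ + 2*l := by ring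
      _ = (j+1) + k * 2^μ + 2^μ * w := by rw [hw]
      _ = (j+1) + (k + w) * 2^μ := by ring
    rw [e, val_add_pow μ (j+1) (k+w) (by omega) hjlt]
  have key2 : padicValNat 2 (m - l + 1) = padicValNat 2 (j+1) := by
    have e : m - l + 1 = (j+1) + k * 2^μ := by
      rw [hm, hKm]
      omega
    rw [e, val_add_pow μ (j+1) k (by omega) hjlt]
  have hgoal1 : l + k * 2 ^ μ + j + 1 = m + 1 := by rw [hm]
  rw [hgoal1, val_A l (m+1) (by omega), val_A l m hlm]
  have ef1 : m + 1 + l = (m + l) + 1 := by omega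
  have ef2 : m + 1 - l = (m - l) + 1 := by omega
  rw [ef1, ef2, Nat.factorial_succ, Nat.factorial_succ]
  rw [padicValNat.mul (by omega) (Nat.factorial_ne_zero _),
    padicValNat.mul (by omega) (Nat.factorial_ne_zero _)]
  rw [key1]
  rw [key2]
  push_cast
  ring
end

section
/- Fix l ≥ 1 and set μ = 1 + ν₂(l). For every k ≥ 0, ν₂(A_{l, l+(k+1)·2^μ}) ≠ ν₂(A_{l, l+(k+1)·2^μ − 1}); that is, consecutive blocks of length 2^μ take distinct constant values. -/
open Finset

/-- summand -/

noncomputable def tf (l m k : ℕ) : ℚ :=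
  (2 : ℚ) ^ k * ((2 * m - 2 * k).choose (m - k)) * ((m + k).choose m) * (k.choose l)

/-- extended sum -/

noncomputable def Sg (l m : ℕ) : ℚ := ∑ k ∈ range (m + 1), tf l m k

noncomputable def Gq (l m k : ℕ) : ℚ :=
  -2 * ((m : ℚ) + 1) * ((l : ℚ) + 1) * 2 ^ k * ((2 * (m + 1) - 2 * k).choose (m + 1 - k)) *
    ((m + k).choose m) * (k.choose (l + 1))

instance fact2 : Fact (Nat.Prime 2) := ⟨Nat.prime_two⟩

lemma A_eq (l m : ℕ) :
    A l m = ((l.factorial * m.factorial : ℕ) : ℚ) / 2 ^ (m - l) * Sg l m := by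
  unfold A Sg
  congr 1
  refine Finset.sum_subset ?_ ?_
  · intro x hx
    simp only [Finset.mem_Icc] at hx
    simp only [Finset.mem_range]
    omega
  · intro x hx hx2
    simp only [Finset.mem_Icc, Finset.mem_range] at hx hx2
    have : x < l := by omega
    simp [tf, Nat.choose_eq_zero_of_lt this]

lemma Sg_zero {l m : ℕ} (h : m < l) : Sg l m = 0 := by
  unfold Sg
  apply Finset.sum_eq_zero
  intro k hk
  simp only [Finset.mem_range] at hk
  have : k < l := by omega
  simp [tf, Nat.choose_eq_zero_of_lt this]

lemma A_zero {l m : ℕ} (h : m < l) : A l m = 0 := by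
  rw [A_eq, Sg_zero h, mul_zero]

-- descFactorial helper lemmas over ℚ

lemma dq1 (k l : ℕ) : ((k.choose l : ℕ) : ℚ) * (l.factorial : ℚ) = (k.descFactorial l : ℚ) := by
  rw [Nat.descFactorial_eq_factorial_mul_choose]
  push_cast
  ring

lemma dq2 (k l : ℕ) : ((k.descFactorial (l + 1) : ℕ) : ℚ) = ((k : ℚ) - l) * (k.descFactorial l : ℚ) := by
  rcases le_or_gt l k with h | h
  · rw [Nat.descFactorial_succ, Nat.cast_mul, Nat.cast_sub h]
  · rw [Nat.descFactorial_eq_zero_iff_lt.2 h, Nat.descFactorial_eq_zero_iff_lt.2 (by omega)]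
    simp

lemma dq3 (k l : ℕ) :
    (((k + 1).descFactorial (l + 1) : ℕ) : ℚ) = ((k : ℚ) + 1) * (k.descFactorial l : ℚ) := by
  rw [Nat.succ_descFactorial_succ]
  push_cast
  ring

-- choose identities over ℚ

lemma qcentral (a : ℕ) :
    ((a : ℚ) + 1) * ((2 * a + 2).choose (a + 1) : ℚ) = 2 * (2 * (a : ℚ) + 1) * ((2 * a).choose a : ℚ) := by
  have h := Nat.succ_mul_centralBinom_succ a
  have h2 : (a + 1) * ((2 * (a + 1)).choose (a + 1)) = 2 * (2 * a + 1) * ((2 * a).choose a) := h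
  have h3 : 2 * (a + 1) = 2 * a + 2 := by ring
  rw [h3] at h2
  exact_mod_cast congrArg (Nat.cast : ℕ → ℚ) h2

lemma qsucc_choose (n k : ℕ) :
    ((n : ℚ) + 1) * (n.choose k : ℚ) = ((n + 1).choose (k + 1) : ℚ) * ((k : ℚ) + 1) := by
  exact_mod_cast congrArg (Nat.cast : ℕ → ℚ) (Nat.add_one_mul_choose_eq n k)

-- ((n:ℚ) - l) * C(n,l) = (l+1) * C(n,l+1)

lemma qchoose_succ_right (n l : ℕ) :
    ((n : ℚ) - l) * (n.choose l : ℚ) = ((l : ℚ) + 1) * (n.choose (l + 1) : ℚ) := by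
  have h1 := dq1 n l
  have h2 := dq1 n (l + 1)
  have h3 := dq2 n l
  have hl : (l.factorial : ℚ) ≠ 0 := by exact_mod_cast l.factorial_ne_zero
  have hl1 : ((l + 1).factorial : ℚ) ≠ 0 := by exact_mod_cast (l + 1).factorial_ne_zero
  have hfs : ((l + 1).factorial : ℚ) = ((l : ℚ) + 1) * (l.factorial : ℚ) := by
    rw [Nat.factorial_succ]; push_cast; ring
  have e1 : (n.choose l : ℚ) = (n.descFactorial l : ℚ) / l.factorial := by
    rw [eq_div_iff hl]; exact h1
  have e2 : (n.choose (l + 1) : ℚ) = (n.descFactorial (l + 1) : ℚ) / ((l + 1).factorial : ℚ) := by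
    rw [eq_div_iff hl1]; exact h2
  rw [e1, e2, h3, hfs]
  field_simp

lemma key (l m k : ℕ) (hk : k ≤ m) :
    ((m : ℚ) + 1) * (((m : ℚ) + 1) - l) * tf l (m + 1) k
      - 2 * (4 * (m : ℚ) + 3 - 2 * l) * ((m : ℚ) + 1 + l) * tf l m k
      + 4 * l * ((l : ℚ) + 1) * tf (l + 1) m k
    = Gq l m (k + 1) - Gq l m k := by
  obtain ⟨a, rfl⟩ : ∃ a, m = k + a := ⟨m - k, by omega⟩
  unfold tf Gq
  have h1 : 2 * (k + a + 1) - 2 * k = 2 * a + 2 := by omega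
  have h2 : k + a + 1 - k = a + 1 := by omega
  have h3 : 2 * (k + a) - 2 * k = 2 * a := by omega
  have h4 : k + a - k = a := by omega
  have h5 : 2 * (k + a + 1) - 2 * (k + 1) = 2 * a := by omega
  have h6 : k + a + 1 - (k + 1) = a := by omega
  have h7 : 2 * (k + a + 1) = 2 * (k + a) + 2 := by ring
  simp only [h1, h2, h3, h4, h5, h6]
  -- nonzero denominators
  have na : ((a : ℚ) + 1) ≠ 0 := by positivity
  have nk : ((k : ℚ) + 1) ≠ 0 := by positivity
  have nka : ((k : ℚ) + (a : ℚ) + 1) ≠ 0 := by positivity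
  have nl : ((l.factorial : ℕ) : ℚ) ≠ 0 := by exact_mod_cast l.factorial_ne_zero
  have nl1 : (((l + 1).factorial : ℕ) : ℚ) ≠ 0 := by exact_mod_cast (l + 1).factorial_ne_zero
  -- atoms
  set d : ℚ := (k.descFactorial l : ℚ) with hd
  -- relations
  have eA : ((2 * a + 2).choose (a + 1) : ℚ) = 2 * (2 * (a : ℚ) + 1) * ((2 * a).choose a : ℚ) / ((a : ℚ) + 1) := by
    rw [eq_div_iff na, mul_comm _ ((a : ℚ) + 1)]; exact qcentral a
  have eB : ((k + a + 1 + k).choose (k + a + 1) : ℚ)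
      = ((k : ℚ) + a + k + 1) * ((k + a + k).choose (k + a) : ℚ) / ((k : ℚ) + a + 1) := by
    have e : k + a + k + 1 = k + a + 1 + k := by omega
    have h := qsucc_choose (k + a + k) (k + a)
    rw [e] at h
    rw [eq_div_iff nka]
    push_cast at h ⊢
    linarith [h]
  have eE : ((k + a + (k + 1)).choose (k + a) : ℚ)
      = ((k : ℚ) + a + k + 1) * ((k + a + k).choose (k + a) : ℚ) / ((k : ℚ) + 1) := by
    have s1 : (k + a + k).choose k = (k + a + k).choose (k + a) := by
      have := Nat.choose_symm (n := k + a + k) (k := k + a) (by omega)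
      have e : k + a + k - (k + a) = k := by omega
      rw [e] at this
      exact this
    have s2 : (k + a + k + 1).choose (k + 1) = (k + a + (k + 1)).choose (k + a) := by
      have := Nat.choose_symm (n := k + a + k + 1) (k := k + 1) (by omega)
      have e : k + a + k + 1 - (k + 1) = k + a := by omega
      rw [e] at this
      have e2 : k + a + k + 1 = k + a + (k + 1) := by omega
      rw [e2] at this
      exact this.symm
    have h := qsucc_choose (k + a + k) k
    rw [s1, s2] at h
    rw [eq_div_iff nk]
    push_cast at h ⊢
    linarith [h]
  have eL : ((k.choose l : ℕ) : ℚ) = d / ((l.factorial : ℕ) : ℚ) := by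
    rw [eq_div_iff nl]; exact dq1 k l
  have eL1 : ((k.choose (l + 1) : ℕ) : ℚ) = ((k : ℚ) - l) * d / (((l + 1).factorial : ℕ) : ℚ) := by
    rw [eq_div_iff nl1, dq1 k (l + 1), dq2]
  have eM : (((k + 1).choose (l + 1) : ℕ) : ℚ) = ((k : ℚ) + 1) * d / (((l + 1).factorial : ℕ) : ℚ) := by
    rw [eq_div_iff nl1, dq1 (k + 1) (l + 1), dq3]
  have efs : (((l + 1).factorial : ℕ) : ℚ) = ((l : ℚ) + 1) * ((l.factorial : ℕ) : ℚ) := by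
    rw [Nat.factorial_succ]; push_cast; ring
  rw [eA, eB, eE, eL, eL1, eM, efs]
  push_cast
  field_simp
  ring

lemma Gq_zero (l m : ℕ) : Gq l m 0 = 0 := by
  unfold Gq
  rw [Nat.choose_eq_zero_of_lt (Nat.succ_pos l)]
  simp

lemma keyB (l m : ℕ) :
    ((m : ℚ) + 1) * (((m : ℚ) + 1) - l) * tf l (m + 1) (m + 1) = - Gq l m (m + 1) := by
  unfold tf Gq
  have h1 : 2 * (m + 1) - 2 * (m + 1) = 0 := by omega
  have h2 : m + 1 - (m + 1) = 0 := by omega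
  simp only [h1, h2, Nat.choose_self]
  have e1 : m + 1 + (m + 1) = 2 * m + 1 + 1 := by omega
  have e2 : m + (m + 1) = 2 * m + 1 := by omega
  rw [e1, e2]
  have hs := qsucc_choose (2 * m + 1) m
  have hr := qchoose_succ_right (m + 1) l
  have nm : ((m : ℚ) + 1) ≠ 0 := by positivity
  have eC : (((2 * m + 1 + 1).choose (m + 1)) : ℚ)
      = (2 * (m : ℚ) + 1 + 1) * (((2 * m + 1).choose m) : ℚ) / ((m : ℚ) + 1) := by
    rw [eq_div_iff nm]
    push_cast at hs ⊢
    linarith [hs]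
  have eR : (((m + 1).choose l : ℕ) : ℚ)  -- not solvable alone; use hr directly
      = (((m + 1).choose l : ℕ) : ℚ) := rfl
  rw [eC]
  push_cast at hr ⊢
  field_simp
  linear_combination (2 * ((m : ℚ) + 1) * (((2 * m + 1).choose m : ℕ) : ℚ)) * hr

lemma Sg_rec (l m : ℕ) :
    ((m : ℚ) + 1) * (((m : ℚ) + 1) - l) * Sg l (m + 1)
      = 2 * (4 * (m : ℚ) + 3 - 2 * l) * ((m : ℚ) + 1 + l) * Sg l m
        - 4 * l * ((l : ℚ) + 1) * Sg (l + 1) m := by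
  have tel : ∑ k ∈ range (m + 1), (Gq l m (k + 1) - Gq l m k) = Gq l m (m + 1) - Gq l m 0 :=
    Finset.sum_range_sub (Gq l m) (m + 1)
  have hsum : ∑ k ∈ range (m + 1),
      (((m : ℚ) + 1) * (((m : ℚ) + 1) - l) * tf l (m + 1) k
        - 2 * (4 * (m : ℚ) + 3 - 2 * l) * ((m : ℚ) + 1 + l) * tf l m k
        + 4 * l * ((l : ℚ) + 1) * tf (l + 1) m k)
      = Gq l m (m + 1) - Gq l m 0 := by
    rw [← tel]
    refine Finset.sum_congr rfl fun k hk => ?_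
    exact key l m k (by simpa using Nat.lt_succ_iff.mp (Finset.mem_range.mp hk))
  rw [Gq_zero, sub_zero] at hsum
  have hexp : Sg l (m + 1) = (∑ k ∈ range (m + 1), tf l (m + 1) k) + tf l (m + 1) (m + 1) := by
    unfold Sg
    rw [Finset.sum_range_succ]
  have hB := keyB l m
  rw [Finset.sum_add_distrib, Finset.sum_sub_distrib, ← Finset.mul_sum, ← Finset.mul_sum,
    ← Finset.mul_sum] at hsum
  unfold Sg
  rw [Finset.sum_range_succ (f := tf l (m + 1)) (n := m + 1)]
  linear_combination hsum + hB

lemma A_rec (l p : ℕ) :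
    ((p : ℚ) + 1) * A l (l + p + 1)
      = (4 * ((l + p : ℕ) : ℚ) + 3 - 2 * l) * (((l + p : ℕ) : ℚ) + 1 + l) * A l (l + p)
        - l * A (l + 1) (l + p) := by
  have hS := Sg_rec l (l + p)
  have e1 : l + p + 1 - l = p + 1 := by omega
  have e2 : l + p - l = p := by omega
  have hf1 : (((l + p + 1).factorial : ℕ) : ℚ)
      = (((l + p : ℕ) : ℚ) + 1) * (((l + p).factorial : ℕ) : ℚ) := by
    have : (l + p + 1).factorial = (l + p + 1) * (l + p).factorial := Nat.factorial_succ _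
    rw [this]; push_cast; ring
  rcases Nat.eq_zero_or_pos p with hp | hp
  · subst hp
    have hz : Sg (l + 1) (l + 0) = 0 := Sg_zero (by omega)
    have e3 : l + 0 - (l + 1) = 0 := by omega
    rw [A_eq, A_eq, A_eq, e1, e2, hz, e3]
    rw [hz] at hS
    push_cast at hS hf1 ⊢
    rw [hf1]
    linear_combination (((l.factorial : ℕ) : ℚ) * (((l + 0).factorial : ℕ) : ℚ) / 2) * hS
  · obtain ⟨q, rfl⟩ : ∃ q, p = q + 1 := ⟨p - 1, by omega⟩
    have e3 : l + (q + 1) - (l + 1) = q := by omega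
    have hf2 : (((l + 1).factorial : ℕ) : ℚ) = ((l : ℚ) + 1) * ((l.factorial : ℕ) : ℚ) := by
      rw [Nat.factorial_succ]; push_cast; ring
    rw [A_eq, A_eq, A_eq, e1, e2, e3]
    push_cast at hS hf1 hf2 ⊢
    rw [hf1, hf2]
    linear_combination (((l.factorial : ℕ) : ℚ) * (((l + (q + 1)).factorial : ℕ) : ℚ) / 2 ^ (q + 1 + 1)) * hS

lemma A_pos {l m : ℕ} (h : l ≤ m) : 0 < A l m := by
  unfold A
  apply mul_pos
  · apply div_pos
    · exact_mod_cast Nat.mul_pos l.factorial_pos m.factorial_pos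
    · positivity
  · apply Finset.sum_pos'
    · intro k hk
      positivity
    · refine ⟨l, Finset.mem_Icc.mpr ⟨le_refl l, h⟩, ?_⟩
      have c1 : 0 < (2 * m - 2 * l).choose (m - l) := Nat.choose_pos (by omega)
      have c2 : 0 < (m + l).choose m := Nat.choose_pos (by omega)
      have c3 : 0 < l.choose l := Nat.choose_pos (le_refl l)
      positivity

lemma A_diag (l : ℕ) : A l l = 2 ^ l * (((2 * l).factorial : ℕ) : ℚ) := by
  unfold A
  rw [Finset.Icc_self, Finset.sum_singleton]
  have e1 : 2 * l - 2 * l = 0 := by omega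
  have e2 : l - l = 0 := by omega
  have e3 : l + l = 2 * l := by omega
  rw [e1, e2, e3, Nat.choose_self, Nat.choose_self]
  have h0 : (2 * l).choose l * l.factorial * l.factorial = (2 * l).factorial := by
    have h := Nat.choose_mul_factorial_mul_factorial (show l ≤ 2 * l by omega)
    have e : 2 * l - l = l := by omega
    rw [e] at h
    exact h
  have hq := congrArg (Nat.cast : ℕ → ℚ) h0
  push_cast at hq ⊢
  field_simp
  linear_combination hq

lemma vfact_succ (n : ℕ) :
    padicValNat 2 (n + 1).factorial = padicValNat 2 (n + 1) + padicValNat 2 n.factorial := by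
  rw [Nat.factorial_succ]
  exact padicValNat.mul (by omega) n.factorial_ne_zero

lemma vq (n : ℕ) : padicValRat 2 (n : ℚ) = padicValNat 2 n := padicValRat.of_nat

lemma vdiag (l : ℕ) : padicValRat 2 (A l l)
    = (l : ℤ) + (padicValNat 2 (l + l).factorial : ℤ) - (padicValNat 2 (l - l).factorial : ℤ) := by
  rw [A_diag]
  have h1 : (2 : ℚ) ^ l ≠ 0 := by positivity
  have h2 : (((2 * l).factorial : ℕ) : ℚ) ≠ 0 := by
    exact_mod_cast (2 * l).factorial_ne_zero
  have hself : padicValRat 2 (2 : ℚ) = 1 := by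
    have hc : ((2 : ℕ) : ℚ) = (2 : ℚ) := by norm_num
    rw [← hc, vq]
    exact_mod_cast padicValNat.self one_lt_two
  rw [padicValRat.mul h1 h2, padicValRat.pow, hself, vq]
  have e : l + l = 2 * l := by omega
  have e2 : l - l = 0 := by omega
  rw [e, e2]
  simp [Nat.factorial_zero, padicValNat.one]

theorem valA : ∀ m l : ℕ, l ≤ m → padicValRat 2 (A l m)
    = (l : ℤ) + (padicValNat 2 (m + l).factorial : ℤ) - (padicValNat 2 (m - l).factorial : ℤ) := by
  intro m
  induction m with
  | zero =>
    intro l hl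
    interval_cases l
    exact vdiag 0
  | succ m ih =>
    intro l hl
    rcases eq_or_lt_of_le hl with rfl | hlt
    · exact vdiag (m + 1)
    · have hlm : l ≤ m := by omega
      obtain ⟨p, rfl⟩ : ∃ p, m = l + p := ⟨m - l, by omega⟩
      have hrec := A_rec l p
      have hApos : 0 < A l (l + p + 1) := A_pos (by omega)
      have hxpos : 0 < A l (l + p) := A_pos (by omega)
      have hx := ih l (by omega)
      have ep : l + p - l = p := by omega
      have ep2 : l + p + l = 2 * l + p := by omega
      rw [ep, ep2] at hx
      have hc : (4 * ((l + p : ℕ) : ℚ) + 3 - 2 * l) * (((l + p : ℕ) : ℚ) + 1 + l)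
          = ((2 * l + 4 * p + 3 : ℕ) : ℚ) * ((2 * l + p + 1 : ℕ) : ℚ) := by
        push_cast; ring
      rw [hc] at hrec
      have hcp : ((p : ℚ) + 1) = ((p + 1 : ℕ) : ℚ) := by push_cast; ring
      rw [hcp] at hrec
      set u1 : ℚ := ((2 * l + 4 * p + 3 : ℕ) : ℚ) * ((2 * l + p + 1 : ℕ) : ℚ) * A l (l + p) with hu1
      have hu1pos : 0 < u1 := by
        have c1 : (0 : ℚ) < ((2 * l + 4 * p + 3 : ℕ) : ℚ) := by exact_mod_cast Nat.succ_pos _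
        have c2 : (0 : ℚ) < ((2 * l + p + 1 : ℕ) : ℚ) := by exact_mod_cast Nat.succ_pos _
        exact mul_pos (mul_pos c1 c2) hxpos
      have hv1 : padicValRat 2 u1
          = (padicValNat 2 (2 * l + p + 1) : ℤ)
            + ((l : ℤ) + (padicValNat 2 (2 * l + p).factorial : ℤ)
              - (padicValNat 2 p.factorial : ℤ)) := by
        rw [hu1, padicValRat.mul (by positivity) (ne_of_gt hxpos),
          padicValRat.mul (by positivity) (by positivity), vq, vq, hx]
        have hodd : padicValNat 2 (2 * l + 4 * p + 3) = 0 :=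
          padicValNat.eq_zero_of_not_dvd (by omega)
        rw [hodd]
        push_cast
        ring
      have et1 : l + p + 1 + l = 2 * l + p + 1 := by omega
      have et2 : l + p + 1 - l = p + 1 := by omega
      rw [et1, et2]
      have hfs1 : padicValNat 2 (2 * l + p + 1).factorial
          = padicValNat 2 (2 * l + p + 1) + padicValNat 2 (2 * l + p).factorial := by
        have := vfact_succ (2 * l + p)
        have e : 2 * l + p + 1 = (2 * l + p) + 1 := by omega
        rw [e]; exact this
      have hfs2 : padicValNat 2 (p + 1).factorial
          = padicValNat 2 (p + 1) + padicValNat 2 p.factorial := vfact_succ p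
      -- valuation of LHS of hrec
      have hLv : padicValRat 2 (((p + 1 : ℕ) : ℚ) * A l (l + p + 1))
          = (padicValNat 2 (p + 1) : ℤ) + padicValRat 2 (A l (l + p + 1)) := by
        rw [padicValRat.mul (by positivity) (ne_of_gt hApos), vq]
      rcases Nat.eq_zero_or_pos p with rfl | hp1
      · -- p = 0 : second term vanishes
        have hz : A (l + 1) (l + 0) = 0 := A_zero (by omega)
        rw [hz, mul_zero, sub_zero] at hrec
        have := congrArg (padicValRat 2) hrec
        rw [hLv, hv1] at this
        omega
      · rcases Nat.eq_zero_or_pos l with rfl | hl1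
        · -- l = 0 : coefficient l = 0
          rw [Nat.cast_zero, zero_mul, sub_zero] at hrec
          have := congrArg (padicValRat 2) hrec
          rw [hLv, hv1] at this
          omega
        · -- main case : l ≥ 1, p ≥ 1
          obtain ⟨q, rfl⟩ : ∃ q, p = q + 1 := ⟨p - 1, by omega⟩
          have hypos : 0 < A (l + 1) (l + (q + 1)) := A_pos (by omega)
          have hy := ih (l + 1) (by omega)
          have ey1 : l + (q + 1) + (l + 1) = 2 * l + q + 2 := by omega
          have ey2 : l + (q + 1) - (l + 1) = q := by omega
          rw [ey1, ey2] at hy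
          set u2 : ℚ := (l : ℚ) * A (l + 1) (l + (q + 1)) with hu2
          have hu2pos : 0 < u2 := by
            apply mul_pos _ hypos
            exact_mod_cast hl1
          have hv2 : padicValRat 2 u2
              = (padicValNat 2 l : ℤ) + ((l : ℤ) + 1 + (padicValNat 2 (2 * l + q + 2).factorial : ℤ)
                - (padicValNat 2 q.factorial : ℤ)) := by
            rw [hu2, padicValRat.mul (by positivity) (ne_of_gt hypos), vq, hy]
            push_cast
            ring
          have hfs3 : padicValNat 2 (2 * l + q + 2).factorial
              = padicValNat 2 (2 * l + q + 2) + padicValNat 2 (2 * l + q + 1).factorial := by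
            have := vfact_succ (2 * l + q + 1)
            have e : 2 * l + q + 2 = (2 * l + q + 1) + 1 := by omega
            rw [e]; exact this
          have hlt12 : padicValRat 2 u1 < padicValRat 2 (-u2) := by
            rw [padicValRat.neg, hv1, hv2]
            have hb1 : padicValNat 2 (2 * l + (q + 1)).factorial
                = padicValNat 2 (2 * l + q + 1).factorial := by
              rw [show 2 * l + (q + 1) = 2 * l + q + 1 from by omega]
            have hb2 : padicValNat 2 (2 * l + (q + 1) + 1)
                = padicValNat 2 (2 * l + q + 2) := by
              rw [show 2 * l + (q + 1) + 1 = 2 * l + q + 2 from by omega]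
            have hq1 : padicValNat 2 (q + 1).factorial
                = padicValNat 2 (q + 1) + padicValNat 2 q.factorial := vfact_succ q
            omega
          have hsum : u1 + (-u2) ≠ 0 := by
            rw [← sub_eq_add_neg, ← hrec]
            positivity
          have hadd := padicValRat.add_eq_of_lt (p := 2) hsum (ne_of_gt hu1pos)
            (by exact ne_of_lt (neg_neg_of_pos hu2pos)) hlt12
          rw [← sub_eq_add_neg] at hadd
          have := congrArg (padicValRat 2) hrec
          rw [hLv, hadd, hv1] at this
          omega

theorem val_A_block_change (l : ℕ) (h : 1 ≤ l) (k : ℕ) :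
    padicValRat 2 (A l (l + (k + 1) * 2 ^ (1 + padicValNat 2 l))) ≠
      padicValRat 2 (A l (l + (k + 1) * 2 ^ (1 + padicValNat 2 l) - 1)) := by
  set e := padicValNat 2 l with he
  set N := (k + 1) * 2 ^ (1 + e) with hN
  have hN2 : 2 ≤ N := by
    have h1 : 2 ≤ 2 ^ (1 + e) := by
      calc 2 = 2 ^ 1 := by norm_num
      _ ≤ 2 ^ (1 + e) := Nat.pow_le_pow_right (by norm_num) (by omega)
    calc 2 ≤ 2 ^ (1 + e) := h1
    _ = 1 * 2 ^ (1 + e) := by ring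
    _ ≤ (k + 1) * 2 ^ (1 + e) := Nat.mul_le_mul_right _ (by omega)
  -- key number-theoretic fact
  have hne : padicValNat 2 (2 * l + N) ≠ padicValNat 2 N := by
    have hdvd : 2 ^ e ∣ l := pow_padicValNat_dvd
    obtain ⟨u, hu⟩ := hdvd
    have hl0 : l ≠ 0 := by omega
    have hodd : ¬ 2 ∣ u := by
      intro ⟨w, hw⟩
      apply pow_succ_padicValNat_not_dvd (p := 2) hl0
      rw [← he, hu, hw]
      exact ⟨w, by ring⟩
    have hu0 : u ≠ 0 := by
      intro h0; rw [h0, Nat.mul_zero] at hu; exact hl0 hu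
    have h2l : 2 * l + N = 2 ^ (1 + e) * (u + (k + 1)) := by
      rw [hu, hN]; ring
    have hNf : N = 2 ^ (1 + e) * (k + 1) := by rw [hN]; ring
    have hv1 : padicValNat 2 (2 * l + N) = (1 + e) + padicValNat 2 (u + (k + 1)) := by
      rw [h2l, padicValNat.mul (by positivity) (by omega), padicValNat.prime_pow]
    have hv2 : padicValNat 2 N = (1 + e) + padicValNat 2 (k + 1) := by
      rw [hNf, padicValNat.mul (by positivity) (by omega), padicValNat.prime_pow]
    rw [hv1, hv2]
    rcases Nat.even_or_odd (k + 1) with hpar | hpar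
    · -- k+1 even : u + (k+1) odd
      have ha : padicValNat 2 (u + (k + 1)) = 0 := by
        apply padicValNat.eq_zero_of_not_dvd
        rcases hpar with ⟨t, ht⟩
        intro ⟨s, hs⟩
        exact hodd ⟨s - t, by omega⟩
      have hb : 1 ≤ padicValNat 2 (k + 1) :=
        one_le_padicValNat_of_dvd (by omega) hpar.two_dvd
      omega
    · have ha : padicValNat 2 (k + 1) = 0 := by
        apply padicValNat.eq_zero_of_not_dvd
        intro hd
        exact (Nat.not_even_iff_odd.mpr hpar) (even_iff_two_dvd.mpr hd)
      have hb : 1 ≤ padicValNat 2 (u + (k + 1)) := by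
        apply one_le_padicValNat_of_dvd (by omega)
        rcases hpar with ⟨t, ht⟩
        rcases hodd' : u with _ | _
        · omega
        · -- u odd, k+1 odd => sum even
          obtain ⟨t2, ht2⟩ : ∃ t2, u = 2 * t2 + 1 := by
            rcases Nat.even_or_odd u with ⟨s, hs⟩ | ⟨s, hs⟩
            · exact absurd ⟨s, by omega⟩ hodd
            · exact ⟨s, by omega⟩
          exact ⟨t2 + t + 1, by omega⟩
      omega
  -- assemble
  have hv1 := valA (l + N) l (by omega)
  have hv2 := valA (l + N - 1) l (by omega)
  have e1 : l + N + l = 2 * l + N := by omega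
  have e2 : l + N - l = N := by omega
  have e3 : l + N - 1 + l = 2 * l + N - 1 := by omega
  have e4 : l + N - 1 - l = N - 1 := by omega
  rw [e1, e2] at hv1
  rw [e3, e4] at hv2
  have f1 := vfact_succ (2 * l + N - 1)
  have f2 := vfact_succ (N - 1)
  have b1 : 2 * l + N - 1 + 1 = 2 * l + N := by omega
  have b2 : N - 1 + 1 = N := by omega
  rw [b1] at f1
  rw [b2] at f2
  rw [hv1, hv2]
  omega
end
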